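/- Let G₁, G₂, G be graphs and f₁ : G → G₁, f₂ : G → G₂ locally surjective homomorphisms. Form the graph H on vertex set V(G₁) ∪ V(G₂) (disjoint union) with edge set E(G₁) ∪ E(G₂) together with an edge [x,y] for x ∈ V(G₁), y ∈ V(G₂) whenever there exists g ∈ V(G) with f₁(g) = x and f₂(g) = y. Then the equivalence relation R on E(H) with the two classes φ = E(G₁) ∪ E(G₂) and φ̄ = the set of connecting edges is an RSP-relation. -/

import Mathlib

open SimpleGraph

variable {V : Type*}

/-- An equivalence relation on a set `E` of edges: reflexive on `E`, symmetric, transitive,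
and only relating elements of `E`. -/
structure IsEquivOn (R : Sym2 V → Sym2 V → Prop) (E : Set (Sym2 V)) : Prop where
  refl : ∀ e ∈ E, R e e
  symm : ∀ {e f}, R e f → R f e
  trans : ∀ {e f g}, R e f → R f g → R e g
  mem_left : ∀ {e f}, R e f → e ∈ E
  mem_right : ∀ {e f}, R e f → f ∈ E

/-- `R` is an RSP-relation on `G`: an equivalence relation on `E(G)` such that any two adjacent
edges in distinct classes span a square (4-cycle) with opposite edges in the same class. -/
def IsRSP (G : SimpleGraph V) (R : Sym2 V → Sym2 V → Prop) : Prop :=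
  IsEquivOn R G.edgeSet ∧
  ∀ x y z : V, G.Adj x y → G.Adj x z → y ≠ z → ¬ R s(x, y) s(x, z) →
    ∃ w : V, w ≠ x ∧ w ≠ y ∧ w ≠ z ∧ G.Adj y w ∧ G.Adj z w ∧
      R s(x, y) s(z, w) ∧ R s(x, z) s(y, w)

/-- A finest RSP-relation: an RSP-relation such that every finer RSP-relation coincides
with it. -/
def IsFinestRSP (G : SimpleGraph V) (R : Sym2 V → Sym2 V → Prop) : Prop :=
  IsRSP G R ∧ ∀ S : Sym2 V → Sym2 V → Prop, IsRSP G S →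
    (∀ e f, S e f → R e f) → (∀ e f, R e f → S e f)

/-- The graph `H` on `V(G₁) ⊕ V(G₂)` consisting of `G₁`, `G₂`, and a connecting edge
`[x, y]` whenever some `g ∈ V(G)` satisfies `f₁ g = x` and `f₂ g = y`. -/
def joinGraph {V1 V2 W : Type*} (G1 : SimpleGraph V1) (G2 : SimpleGraph V2)
    (G : SimpleGraph W) (f1 : W → V1) (f2 : W → V2) : SimpleGraph (V1 ⊕ V2) where
  Adj a b :=
    (∃ u u', a = Sum.inl u ∧ b = Sum.inl u' ∧ G1.Adj u u') ∨
    (∃ v v', a = Sum.inr v ∧ b = Sum.inr v' ∧ G2.Adj v v') ∨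
    (∃ g, (a = Sum.inl (f1 g) ∧ b = Sum.inr (f2 g)) ∨
          (a = Sum.inr (f2 g) ∧ b = Sum.inl (f1 g)))
  symm := by
    constructor
    rintro a b (⟨u, u', rfl, rfl, h⟩ | ⟨v, v', rfl, rfl, h⟩ | ⟨g, ⟨rfl, rfl⟩ | ⟨rfl, rfl⟩⟩)
    · exact Or.inl ⟨u', u, rfl, rfl, h.symm⟩
    · exact Or.inr (Or.inl ⟨v', v, rfl, rfl, h.symm⟩)
    · exact Or.inr (Or.inr ⟨g, Or.inr ⟨rfl, rfl⟩⟩)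
    · exact Or.inr (Or.inr ⟨g, Or.inl ⟨rfl, rfl⟩⟩)
  loopless := by
    constructor
    rintro a (⟨u, u', h1, h2, h⟩ | ⟨v, v', h1, h2, h⟩ | ⟨g, ⟨h1, h2⟩ | ⟨h1, h2⟩⟩)
    · obtain rfl := Sum.inl.inj (h1.symm.trans h2); exact G1.loopless.irrefl u h
    · obtain rfl := Sum.inr.inj (h1.symm.trans h2); exact G2.loopless.irrefl v h
    · exact Sum.inl_ne_inr (h1.symm.trans h2)
    · exact Sum.inr_ne_inl (h1.symm.trans h2)

/-- An edge of a graph on `V1 ⊕ V2` is "pure" if both endpoints lie on the same side. -/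
def pureEdge {V1 V2 : Type*} (e : Sym2 (V1 ⊕ V2)) : Prop :=
  (∃ u u' : V1, e = s(Sum.inl u, Sum.inl u')) ∨ (∃ v v' : V2, e = s(Sum.inr v, Sum.inr v'))

/-- The two-class relation on the edges of a graph `H` on `V1 ⊕ V2`: the class of pure
edges and the class of connecting edges. -/
def crossRel {V1 V2 : Type*} (H : SimpleGraph (V1 ⊕ V2))
    (e f : Sym2 (V1 ⊕ V2)) : Prop :=
  e ∈ H.edgeSet ∧ f ∈ H.edgeSet ∧ (pureEdge e ↔ pureEdge f)


section Helpers

variable {V1 V2 W : Type*} {G1 : SimpleGraph V1} {G2 : SimpleGraph V2}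
  {G : SimpleGraph W} {f1 : W → V1} {f2 : W → V2}

lemma joinGraph_adj_inl_inl {a b : V1} :
    (joinGraph G1 G2 G f1 f2).Adj (Sum.inl a) (Sum.inl b) ↔ G1.Adj a b := by
  constructor
  · rintro (⟨u, u', h1, h2, h⟩ | ⟨v, v', h1, h2, h⟩ | ⟨g, ⟨h1, h2⟩ | ⟨h1, h2⟩⟩) <;>
      simp_all
  · intro h; exact Or.inl ⟨a, b, rfl, rfl, h⟩

lemma joinGraph_adj_inr_inr {a b : V2} :
    (joinGraph G1 G2 G f1 f2).Adj (Sum.inr a) (Sum.inr b) ↔ G2.Adj a b := by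
  constructor
  · rintro (⟨u, u', h1, h2, h⟩ | ⟨v, v', h1, h2, h⟩ | ⟨g, ⟨h1, h2⟩ | ⟨h1, h2⟩⟩) <;>
      simp_all
  · intro h; exact Or.inr (Or.inl ⟨a, b, rfl, rfl, h⟩)

lemma joinGraph_adj_inl_inr {a : V1} {b : V2} :
    (joinGraph G1 G2 G f1 f2).Adj (Sum.inl a) (Sum.inr b) ↔ ∃ g, f1 g = a ∧ f2 g = b := by
  constructor
  · rintro (⟨u, u', h1, h2, h⟩ | ⟨v, v', h1, h2, h⟩ | ⟨g, ⟨h1, h2⟩ | ⟨h1, h2⟩⟩) <;>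
      simp_all
    exact ⟨g, rfl, rfl⟩
  · rintro ⟨g, rfl, rfl⟩; exact Or.inr (Or.inr ⟨g, Or.inl ⟨rfl, rfl⟩⟩)

lemma pure_ll {a b : V1} : pureEdge (V2 := V2) s(Sum.inl a, Sum.inl b) :=
  Or.inl ⟨a, b, rfl⟩

lemma pure_rr {a b : V2} : pureEdge (V1 := V1) s(Sum.inr a, Sum.inr b) :=
  Or.inr ⟨a, b, rfl⟩

lemma not_pure_lr {a : V1} {b : V2} : ¬ pureEdge s(Sum.inl a, Sum.inr b) := by
  rintro (⟨u, u', h⟩ | ⟨v, v', h⟩) <;> rw [Sym2.eq_iff] at h <;> rcases h with ⟨h1, h2⟩ | ⟨h1, h2⟩ <;> simp_all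

lemma not_pure_rl {a : V2} {b : V1} : ¬ pureEdge s(Sum.inr a, Sum.inl b) := by
  rw [Sym2.eq_swap]; exact not_pure_lr

/-- Key square lemma: assuming `s(x,y)` pure and `s(x,z)` not pure. -/
lemma key (G1 : SimpleGraph V1) (G2 : SimpleGraph V2) (G : SimpleGraph W)
    (f1 : W → V1) (f2 : W → V2)
    (hom1 : ∀ g g', G.Adj g g' → G1.Adj (f1 g) (f1 g'))
    (hom2 : ∀ g g', G.Adj g g' → G2.Adj (f2 g) (f2 g'))
    (hsurj1 : ∀ g w, G1.Adj (f1 g) w → ∃ g', G.Adj g g' ∧ f1 g' = w)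
    (hsurj2 : ∀ g w, G2.Adj (f2 g) w → ∃ g', G.Adj g g' ∧ f2 g' = w)
    (x y z : V1 ⊕ V2) (hxy : (joinGraph G1 G2 G f1 f2).Adj x y)
    (hxz : (joinGraph G1 G2 G f1 f2).Adj x z)
    (hp : pureEdge s(x, y)) (hnp : ¬ pureEdge s(x, z)) :
    ∃ w : V1 ⊕ V2, w ≠ x ∧ w ≠ y ∧ w ≠ z ∧
      (joinGraph G1 G2 G f1 f2).Adj y w ∧ (joinGraph G1 G2 G f1 f2).Adj z w ∧
      crossRel (joinGraph G1 G2 G f1 f2) s(x, y) s(z, w) ∧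
      crossRel (joinGraph G1 G2 G f1 f2) s(x, z) s(y, w) := by
  set H := joinGraph G1 G2 G f1 f2 with hH
  match x with
  | Sum.inl a =>
    obtain ⟨b, rfl⟩ : ∃ b, y = Sum.inl b := by
      match y with
      | Sum.inl b => exact ⟨b, rfl⟩
      | Sum.inr b => exact absurd hp not_pure_lr
    obtain ⟨c, rfl⟩ : ∃ c, z = Sum.inr c := by
      match z with
      | Sum.inl c => exact absurd pure_ll hnp
      | Sum.inr c => exact ⟨c, rfl⟩
    rw [joinGraph_adj_inl_inl] at hxy
    rw [joinGraph_adj_inl_inr] at hxz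
    obtain ⟨g, hg1, hg2⟩ := hxz
    obtain ⟨g', hgg', hg'1⟩ := hsurj1 g b (hg1 ▸ hxy)
    refine ⟨Sum.inr (f2 g'), by simp, by simp, ?_, ?_, ?_, ?_, ?_⟩
    · simpa using ((hg2 ▸ hom2 g g' hgg').ne' : f2 g' ≠ c)
    · exact joinGraph_adj_inl_inr.2 ⟨g', hg'1, rfl⟩
    · exact joinGraph_adj_inr_inr.2 (hg2 ▸ hom2 g g' hgg')
    · exact ⟨(joinGraph_adj_inl_inl.2 hxy) |> (mem_edgeSet _).mpr,
        (joinGraph_adj_inr_inr.2 (hg2 ▸ hom2 g g' hgg')) |> (mem_edgeSet _).mpr,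
        iff_of_true pure_ll pure_rr⟩
    · exact ⟨(joinGraph_adj_inl_inr.2 ⟨g, hg1, hg2⟩) |> (mem_edgeSet _).mpr,
        (joinGraph_adj_inl_inr.2 ⟨g', hg'1, rfl⟩) |> (mem_edgeSet _).mpr,
        iff_of_false not_pure_lr not_pure_lr⟩
  | Sum.inr a =>
    obtain ⟨b, rfl⟩ : ∃ b, y = Sum.inr b := by
      match y with
      | Sum.inl b => exact absurd hp not_pure_rl
      | Sum.inr b => exact ⟨b, rfl⟩
    obtain ⟨c, rfl⟩ : ∃ c, z = Sum.inl c := by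
      match z with
      | Sum.inl c => exact ⟨c, rfl⟩
      | Sum.inr c => exact absurd pure_rr hnp
    rw [joinGraph_adj_inr_inr] at hxy
    have hxz' : ∃ g, f1 g = c ∧ f2 g = a := by
      have := hxz.symm
      rwa [joinGraph_adj_inl_inr] at this
    obtain ⟨g, hg1, hg2⟩ := hxz'
    obtain ⟨g', hgg', hg'2⟩ := hsurj2 g b (hg2 ▸ hxy)
    refine ⟨Sum.inl (f1 g'), by simp, by simp, ?_, ?_, ?_, ?_, ?_⟩
    · simpa using ((hg1 ▸ hom1 g g' hgg').ne' : f1 g' ≠ c)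
    · exact (joinGraph_adj_inl_inr.2 ⟨g', rfl, hg'2⟩).symm
    · exact joinGraph_adj_inl_inl.2 (hg1 ▸ hom1 g g' hgg')
    · exact ⟨(joinGraph_adj_inr_inr.2 hxy) |> (mem_edgeSet _).mpr,
        (joinGraph_adj_inl_inl.2 (hg1 ▸ hom1 g g' hgg')) |> (mem_edgeSet _).mpr,
        iff_of_true pure_rr pure_ll⟩
    · exact ⟨((joinGraph_adj_inl_inr.2 ⟨g, hg1, hg2⟩).symm) |> (mem_edgeSet _).mpr,
        ((joinGraph_adj_inl_inr.2 ⟨g', rfl, hg'2⟩).symm) |> (mem_edgeSet _).mpr,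
        iff_of_false not_pure_rl not_pure_rl⟩

end Helpers

/-- Connecting `G₁` and `G₂` along two locally surjective homomorphisms `f₁ : G → G₁`,
`f₂ : G → G₂` yields a graph `H` on which the two-class relation with classes
`φ = E(G₁) ∪ E(G₂)` and `φ̄` (the connecting edges) is an RSP-relation. -/
theorem stmt15 {V1 V2 W : Type*} (G1 : SimpleGraph V1) (G2 : SimpleGraph V2)
    (G : SimpleGraph W) (f1 : W → V1) (f2 : W → V2)
    (hom1 : ∀ g g', G.Adj g g' → G1.Adj (f1 g) (f1 g'))
    (hom2 : ∀ g g', G.Adj g g' → G2.Adj (f2 g) (f2 g'))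
    (hsurj1 : ∀ g w, G1.Adj (f1 g) w → ∃ g', G.Adj g g' ∧ f1 g' = w)
    (hsurj2 : ∀ g w, G2.Adj (f2 g) w → ∃ g', G.Adj g g' ∧ f2 g' = w) :
    IsRSP (joinGraph G1 G2 G f1 f2) (crossRel (joinGraph G1 G2 G f1 f2)) := by
  constructor
  · exact {
      refl := fun e he => ⟨he, he, Iff.rfl⟩
      symm := fun h => ⟨h.2.1, h.1, h.2.2.symm⟩
      trans := fun h h' => ⟨h.1, h'.2.1, h.2.2.trans h'.2.2⟩
      mem_left := fun h => h.1
      mem_right := fun h => h.2.1 }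
  · intro x y z hxy hxz hyz hR
    have hne : ¬ (pureEdge s(x, y) ↔ pureEdge s(x, z)) :=
      fun h => hR ⟨hxy |> (mem_edgeSet _).mpr, hxz |> (mem_edgeSet _).mpr, h⟩
    by_cases hp : pureEdge s(x, y)
    · have hnp : ¬ pureEdge s(x, z) := fun h => hne (iff_of_true hp h)
      exact key G1 G2 G f1 f2 hom1 hom2 hsurj1 hsurj2 x y z hxy hxz hp hnp
    · have hp2 : pureEdge s(x, z) := by
        by_contra h; exact hne (iff_of_false hp h)
      obtain ⟨w, hw1, hw2, hw3, hw4, hw5, hw6, hw7⟩ :=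
        key G1 G2 G f1 f2 hom1 hom2 hsurj1 hsurj2 x z y hxz hxy hp2 hp
      exact ⟨w, hw1, hw3, hw2, hw5, hw4, hw7, hw6⟩
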